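/- The eight states |0,0,0⟩, |a,1,0⟩, |a',1,0⟩, |0,b,1⟩, |0,b',1⟩, |1,0,c⟩, |1,0,c'⟩, |1,1,1⟩ in ℂ²⊗ℂ²⊗ℂ², where {|a⟩,|a'⟩}, {|b⟩,|b'⟩}, {|c⟩,|c'⟩} are orthonormal bases of ℂ², are pairwise orthogonal and span ℂ²⊗ℂ²⊗ℂ², i.e., they form an orthogonal product basis. -/

import Mathlib

open scoped ComplexInnerProductSpace Matrix
noncomputable section
/-- A qubit state space `ℂ²`. -/
abbrev Qubit := EuclideanSpace ℂ (Fin 2)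
/-- The standard basis vector `|0⟩`. -/
def e0 : Qubit := EuclideanSpace.single 0 1
/-- The standard basis vector `|1⟩`. -/
def e1 : Qubit := EuclideanSpace.single 1 1
/-- `OB a a'` means `{a, a'}` is an orthonormal basis of `ℂ²`. -/
def OB (a a' : Qubit) : Prop := ⟪a, a⟫ = 1 ∧ ⟪a', a'⟫ = 1 ∧ ⟪a, a'⟫ = 0
/-- The two-qubit product state `a ⊗ b`. -/
def prod2 (a b : Qubit) : EuclideanSpace ℂ (Fin 2 × Fin 2) := WithLp.toLp 2 (fun (p : Fin 2 × Fin 2) => a p.1 * b p.2)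
/-- The three-qubit product state `a ⊗ b ⊗ c`. -/
def prod3 (a b c : Qubit) : EuclideanSpace ℂ (Fin 2 × Fin 2 × Fin 2) :=
  WithLp.toLp 2 (fun (p : Fin 2 × Fin 2 × Fin 2) => a p.1 * b p.2.1 * c p.2.2)
/-- The four-qubit product state `a ⊗ b ⊗ c ⊗ d`. -/
def prod4 (a b c d : Qubit) : EuclideanSpace ℂ (Fin 2 × Fin 2 × Fin 2 × Fin 2) :=
  WithLp.toLp 2 (fun (p : Fin 2 × Fin 2 × Fin 2 × Fin 2) => a p.1 * b p.2.1 * c p.2.2.1 * d p.2.2.2)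
/-- Apply a `2 × 2` matrix to a qubit state. -/
def appM (A : Matrix (Fin 2) (Fin 2) ℂ) (v : Qubit) : Qubit := WithLp.toLp 2 (fun i => ∑ j, A i j * v j)


lemma inner_prod3 (x y z u v w : Qubit) :
    ⟪prod3 x y z, prod3 u v w⟫ = ⟪x, u⟫ * ⟪y, v⟫ * ⟪z, w⟫ := by
  simp only [prod3, WithLp.ofLp_toLp, PiLp.inner_apply, RCLike.inner_apply, Fintype.sum_prod_type,
    Fin.sum_univ_two, map_mul]
  ring

lemma inner_e00 : (⟪e0, e0⟫ : ℂ) = 1 := by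
  simp [e0, EuclideanSpace.inner_single_left, EuclideanSpace.single_apply]
lemma inner_e11 : (⟪e1, e1⟫ : ℂ) = 1 := by
  simp [e1, EuclideanSpace.inner_single_left, EuclideanSpace.single_apply]
lemma inner_e01 : (⟪e0, e1⟫ : ℂ) = 0 := by
  simp [e0, e1, EuclideanSpace.inner_single_left, EuclideanSpace.single_apply]
lemma inner_e10 : (⟪e1, e0⟫ : ℂ) = 0 := by
  simp [e0, e1, EuclideanSpace.inner_single_left, EuclideanSpace.single_apply]

lemma vec8_at5 {α : Type*} (a0 a1 a2 a3 a4 a5 a6 a7 : α) :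
    ![a0, a1, a2, a3, a4, a5, a6, a7] 5 = a5 := rfl
lemma vec8_at6 {α : Type*} (a0 a1 a2 a3 a4 a5 a6 a7 : α) :
    ![a0, a1, a2, a3, a4, a5, a6, a7] 6 = a6 := rfl
lemma vec8_at7 {α : Type*} (a0 a1 a2 a3 a4 a5 a6 a7 : α) :
    ![a0, a1, a2, a3, a4, a5, a6, a7] 7 = a7 := rfl

/-- The eight states `|0,0,0⟩, |a,1,0⟩, |a',1,0⟩, |0,b,1⟩, |0,b',1⟩,
|1,0,c⟩, |1,0,c'⟩, |1,1,1⟩`, where `{a,a'}, {b,b'}, {c,c'}` are orthonormal bases of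
`ℂ²`, are pairwise orthogonal and span `ℂ²⊗ℂ²⊗ℂ²`, i.e. they form an OPB. -/
theorem M31_is_OPB
    (a a' b b' c c' : Qubit) (ha : OB a a') (hb : OB b b') (hc : OB c c') :
    (∀ j k : Fin 8, j ≠ k →
      ⟪![prod3 e0 e0 e0, prod3 a e1 e0, prod3 a' e1 e0, prod3 e0 b e1,
          prod3 e0 b' e1, prod3 e1 e0 c, prod3 e1 e0 c', prod3 e1 e1 e1] j,
        ![prod3 e0 e0 e0, prod3 a e1 e0, prod3 a' e1 e0, prod3 e0 b e1,
          prod3 e0 b' e1, prod3 e1 e0 c, prod3 e1 e0 c', prod3 e1 e1 e1] k⟫ = 0) ∧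
    Submodule.span ℂ
      (Set.range ![prod3 e0 e0 e0, prod3 a e1 e0, prod3 a' e1 e0, prod3 e0 b e1,
        prod3 e0 b' e1, prod3 e1 e0 c, prod3 e1 e0 c', prod3 e1 e1 e1]) = ⊤ := by
  set f : Fin 8 → EuclideanSpace ℂ (Fin 2 × Fin 2 × Fin 2) :=
    ![prod3 e0 e0 e0, prod3 a e1 e0, prod3 a' e1 e0, prod3 e0 b e1,
      prod3 e0 b' e1, prod3 e1 e0 c, prod3 e1 e0 c', prod3 e1 e1 e1] with hf
  obtain ⟨ha1, ha2, ha3⟩ := ha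
  obtain ⟨hb1, hb2, hb3⟩ := hb
  obtain ⟨hc1, hc2, hc3⟩ := hc
  have ha3' : ⟪a', a⟫ = 0 := by rw [← inner_conj_symm, ha3]; simp
  have hb3' : ⟪b', b⟫ = 0 := by rw [← inner_conj_symm, hb3]; simp
  have hc3' : ⟪c', c⟫ = 0 := by rw [← inner_conj_symm, hc3]; simp
  have horth : Orthonormal ℂ f := by
    rw [orthonormal_iff_ite]
    intro i j
    fin_cases i <;> fin_cases j <;>
      simp [-PiLp.inner_apply, -inner_self_eq_norm_sq_to_K, hf, vec8_at5, vec8_at6, vec8_at7, inner_prod3,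
        inner_e00, inner_e11, inner_e01, inner_e10,
        ha1, ha2, ha3, ha3', hb1, hb2, hb3, hb3', hc1, hc2, hc3, hc3']
  refine ⟨fun j k hjk => ?_, ?_⟩
  · have := (orthonormal_iff_ite.mp horth) j k
    rwa [if_neg hjk] at this
  · refine horth.linearIndependent.span_eq_top_of_card_eq_finrank ?_
    simp [finrank_euclideanSpace]
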